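/- Let (a_1,…,a_m) be a telescopic sequence, S the numerical semigroup it generates, and g ≥ 1 the number of gaps. Then S is symmetric: for every integer n with 0 ≤ n ≤ 2g − 1, n belongs to S if and only if 2g − 1 − n does not belong to S. -/

import Mathlib

/-- `dseq a i = gcd(a_1, …, a_i)`. -/
def dseq (a : ℕ → ℕ) (i : ℕ) : ℕ := (Finset.Icc 1 i).gcd a

/-- The telescopic condition:
`a_i/d_i ∈ (a_1/d_{i-1})ℤ_{≥0} + ⋯ + (a_{i-1}/d_{i-1})ℤ_{≥0}` for `2 ≤ i ≤ m`. -/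
def Telescopic (m : ℕ) (a : ℕ → ℕ) : Prop :=
  ∀ i, 2 ≤ i → i ≤ m →
    ∃ k : ℕ → ℕ,
      a i / dseq a i = ∑ j ∈ Finset.Icc 1 (i - 1), (a j / dseq a (i - 1)) * k j

/-- Integer membership in the semigroup. -/
def inS (m : ℕ) (a : ℕ → ℕ) (n : ℤ) : Prop :=
  ∃ x : ℕ → ℕ, n = ∑ i ∈ Finset.Icc 1 m, (a i : ℤ) * x i

lemma dseq_dvd (a : ℕ → ℕ) {i j : ℕ} (h1 : 1 ≤ j) (h2 : j ≤ i) : dseq a i ∣ a j :=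
  Finset.gcd_dvd (Finset.mem_Icc.mpr ⟨h1, h2⟩)

lemma dseq_pos (a : ℕ → ℕ) {i : ℕ} (hi : 1 ≤ i) (ha : 0 < a 1) : 0 < dseq a i :=
  Nat.pos_of_dvd_of_pos (dseq_dvd a le_rfl hi) ha

lemma div_div_helper {d e x : ℕ} (he : 0 < e) (h1 : d ∣ e) (h2 : e ∣ x) :
    x / d / (e / d) = x / e := by
  obtain ⟨e', rfl⟩ := h1
  obtain ⟨f, rfl⟩ := h2
  have hd : d ≠ 0 ∧ e' ≠ 0 := mul_ne_zero_iff.mp he.ne'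
  have hd0 : 0 < d := Nat.pos_of_ne_zero hd.1
  have he0 : 0 < e' := Nat.pos_of_ne_zero hd.2
  rw [mul_assoc, Nat.mul_div_cancel_left _ hd0, Nat.mul_div_cancel_left _ hd0,
    Nat.mul_div_cancel_left _ he0, ← mul_assoc, Nat.mul_div_cancel_left _ (by positivity)]

lemma gcd_div_mul (s : Finset ℕ) (f : ℕ → ℕ) (d : ℕ) (h : ∀ j ∈ s, d ∣ f j) :
    d * s.gcd (fun j => f j / d) = s.gcd f := by
  have := Finset.gcd_mul_left (s := s) (f := fun j => f j / d) (a := d)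
  rw [normalize_eq] at this
  rw [← this]
  exact Finset.gcd_congr rfl (fun j hj => Nat.mul_div_cancel' (h j hj))

lemma key : ∀ m : ℕ, 1 ≤ m → ∀ a : ℕ → ℕ,
    (∀ i, 1 ≤ i → i ≤ m → 0 < a i) →
    (Finset.Icc 1 m).gcd a = 1 →
    Telescopic m a →
    ∃ F : ℤ, ∀ n : ℤ, inS m a n ↔ ¬ inS m a (F - n) := by
  intro m
  induction m with
  | zero => intro h; omega
  | succ m ih =>
    intro _ a hpos hgcd htel
    rcases Nat.eq_zero_or_pos m with rfl | hm
    · -- base case: single generator, a 1 = 1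
      have ha1 : a 1 = 1 := by simpa [dseq] using hgcd
      have hiff : ∀ z : ℤ, inS 1 a z ↔ 0 ≤ z := by
        intro z
        constructor
        · rintro ⟨x, rfl⟩
          exact Finset.sum_nonneg fun i _ => by positivity
        · intro hz
          exact ⟨fun _ => z.toNat, by
            simp [Finset.Icc_self, ha1, Int.toNat_of_nonneg hz]⟩
      refine ⟨-1, fun n => ?_⟩
      rw [hiff, hiff]
      omega
    · -- inductive step
      have ha1pos : 0 < a 1 := hpos 1 le_rfl (by omega)
      set A := a (m + 1) with hA
      set d := dseq a m with hd
      have hdpos : 0 < d := dseq_pos a hm ha1pos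
      have hdvd : ∀ j, 1 ≤ j → j ≤ m → d ∣ a j := fun j h1 h2 => dseq_dvd a h1 h2
      set b : ℕ → ℕ := fun j => a j / d with hb
      have hab : ∀ j, 1 ≤ j → j ≤ m → a j = d * b j :=
        fun j h1 h2 => (Nat.mul_div_cancel' (hdvd j h1 h2)).symm
      have hbpos : ∀ i, 1 ≤ i → i ≤ m → 0 < b i := fun i h1 h2 =>
        Nat.div_pos (Nat.le_of_dvd (hpos i h1 (by omega)) (hdvd i h1 h2)) hdpos
      have hgcdb : (Finset.Icc 1 m).gcd b = 1 := by
        have h1 : d * (Finset.Icc 1 m).gcd b = d := by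
          rw [hb]
          exact gcd_div_mul _ _ _ (fun j hj => by
            have := Finset.mem_Icc.mp hj; exact hdvd j this.1 this.2)
        exact Nat.eq_of_mul_eq_mul_left hdpos (by rw [h1, mul_one])
      have key_div : ∀ i j, 1 ≤ j → j ≤ i → i ≤ m → b j / dseq b i = a j / dseq a i := by
        intro i j h1 h2 h3
        have hgm : d * dseq b i = dseq a i := by
          rw [hb, dseq]
          exact gcd_div_mul _ _ _ (fun j hj => by
            have := Finset.mem_Icc.mp hj; exact hdvd j this.1 (le_trans this.2 h3))
        have he : dseq b i = dseq a i / d := by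
          rw [← hgm, Nat.mul_div_cancel_left _ hdpos]
        rw [he, hb]
        exact div_div_helper (dseq_pos a (le_trans h1 h2) ha1pos)
          ⟨dseq b i, hgm.symm⟩ (dseq_dvd a h1 h2)
      have htelb : Telescopic m b := by
        intro i h2 him
        obtain ⟨k, hk⟩ := htel i h2 (by omega)
        refine ⟨k, ?_⟩
        rw [key_div i i (by omega) le_rfl him, hk]
        exact Finset.sum_congr rfl (fun j hj => by
          have hj' := Finset.mem_Icc.mp hj
          rw [key_div (i - 1) j hj'.1 hj'.2 (by omega)])
      have hgcdm1 : dseq a (m + 1) = 1 := hgcd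
      have hcop : Nat.gcd A d = 1 := by
        have : dseq a (m + 1) = Nat.gcd A d := by
          rw [dseq, ← Finset.insert_Icc_right_eq_Icc_add_one (by omega : 1 ≤ m + 1),
            Finset.gcd_insert]
          rfl
        rw [this] at hgcdm1
        exact hgcdm1
      obtain ⟨k, hk⟩ := htel (m + 1) (by omega) le_rfl
      have hAmem : (A : ℕ) = ∑ j ∈ Finset.Icc 1 m, b j * k j := by
        rw [hgcdm1, Nat.div_one] at hk
        simpa [hb, hd] using hk
      obtain ⟨F', hF'⟩ := ih hm b hbpos hgcdb htelb
      have hsum_d : ∀ x : ℕ → ℕ,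
          ∑ i ∈ Finset.Icc 1 m, (a i : ℤ) * x i
            = d * ∑ i ∈ Finset.Icc 1 m, (b i : ℤ) * x i := by
        intro x
        rw [Finset.mul_sum]
        refine Finset.sum_congr rfl (fun j hj => ?_)
        have := Finset.mem_Icc.mp hj
        rw [hab j this.1 this.2]
        push_cast
        ring_nf
      have hsplit : ∀ n : ℤ, inS (m + 1) a n ↔
          ∃ t : ℕ, t < d ∧ ∃ w : ℤ, inS m b w ∧ n = d * w + t * A := by
        intro n
        constructor
        · rintro ⟨x, rfl⟩
          set q := x (m + 1) / d with hq
          set r := x (m + 1) % d with hr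
          refine ⟨r, Nat.mod_lt _ hdpos,
            ∑ i ∈ Finset.Icc 1 m, (b i : ℤ) * ((x i + q * k i : ℕ) : ℤ),
            ⟨fun i => x i + q * k i, rfl⟩, ?_⟩
          rw [← Finset.insert_Icc_right_eq_Icc_add_one (by omega : 1 ≤ m + 1),
            Finset.sum_insert (by simp), hsum_d x]
          have hw : ∑ i ∈ Finset.Icc 1 m, (b i : ℤ) * ((x i + q * k i : ℕ) : ℤ)
              = (∑ i ∈ Finset.Icc 1 m, (b i : ℤ) * x i)
                + q * ∑ i ∈ Finset.Icc 1 m, (b i : ℤ) * k i := by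
            rw [Finset.mul_sum, ← Finset.sum_add_distrib]
            exact Finset.sum_congr rfl (fun j _ => by push_cast; ring)
          have hAc : (A : ℤ) = ∑ i ∈ Finset.Icc 1 m, (b i : ℤ) * k i := by
            exact_mod_cast congrArg (Nat.cast : ℕ → ℤ) hAmem
          have hx : (x (m + 1) : ℤ) = d * q + r := by
            exact_mod_cast (Nat.div_add_mod (x (m + 1)) d).symm
          rw [hw, ← hAc, hx]
          ring
        · rintro ⟨t, ht, w, ⟨y, rfl⟩, heq⟩
          refine ⟨fun i => if i = m + 1 then t else y i, ?_⟩
          rw [← Finset.insert_Icc_right_eq_Icc_add_one (by omega : 1 ≤ m + 1),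
            Finset.sum_insert (by simp)]
          have hcongr : ∑ i ∈ Finset.Icc 1 m,
              (a i : ℤ) * ((fun i => if i = m + 1 then t else y i) i : ℕ)
              = ∑ i ∈ Finset.Icc 1 m, (a i : ℤ) * y i := by
            refine Finset.sum_congr rfl (fun i hi => ?_)
            have := Finset.mem_Icc.mp hi
            simp only []
            rw [if_neg (by omega)]
          rw [hcongr, heq, hsum_d y]
          have hif : (fun i => if i = m + 1 then t else y i) (m + 1) = t := if_pos rfl
          rw [hif, ← hA]
          ring
      have hcopZ : IsCoprime (A : ℤ) (d : ℤ) := by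
        rw [Int.isCoprime_iff_gcd_eq_one]
        simpa [Int.gcd_natCast_natCast] using hcop
      have hex : ∀ n : ℤ, ∃ t : ℕ, t < d ∧ (d : ℤ) ∣ n - t * A := by
        intro n
        obtain ⟨u, v, huv⟩ := hcopZ
        have hdne : (d : ℤ) ≠ 0 := by exact_mod_cast hdpos.ne'
        have h1 : 0 ≤ n * u % (d : ℤ) := Int.emod_nonneg _ hdne
        have h2 : n * u % (d : ℤ) < d := Int.emod_lt_of_pos _ (by exact_mod_cast hdpos)
        refine ⟨(n * u % (d : ℤ)).toNat, by omega, ?_⟩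
        have h3 : (((n * u % (d : ℤ)).toNat : ℤ)) = n * u % d := Int.toNat_of_nonneg h1
        rw [h3, Int.emod_def]
        exact ⟨n * v + n * u / d * A, by linear_combination (-n) * huv⟩
      have huniq : ∀ (n : ℤ) (t t' : ℕ), t < d → t' < d →
          (d : ℤ) ∣ n - t * A → (d : ℤ) ∣ n - t' * A → t = t' := by
        intro n t t' h1 h2 h3 h4
        have h5 := dvd_sub h3 h4
        rw [show n - ↑t * ↑A - (n - ↑t' * ↑A) = ((t' : ℤ) - t) * A by ring] at h5
        have h6 : (d : ℤ) ∣ (t' : ℤ) - t := hcopZ.symm.dvd_of_dvd_mul_right h5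
        have h7 : ((t' : ℤ) - t) = 0 := Int.eq_zero_of_abs_lt_dvd h6 (by
          rw [abs_lt]; constructor <;> push_cast <;> omega)
        omega
      refine ⟨(d : ℤ) * F' + ((d : ℤ) - 1) * A, fun n => ?_⟩
      obtain ⟨t, ht, hdt⟩ := hex n
      obtain ⟨w₀, hw₀⟩ := hdt
      set F : ℤ := (d : ℤ) * F' + ((d : ℤ) - 1) * A with hF
      have hdne : (d : ℤ) ≠ 0 := by exact_mod_cast hdpos.ne'
      have iff1 : inS (m + 1) a n ↔ inS m b w₀ := by
        rw [hsplit]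
        constructor
        · rintro ⟨t', ht', w, hw, heq⟩
          have htt : t' = t := huniq n t' t ht' ht ⟨w, by linarith⟩ ⟨w₀, hw₀⟩
          subst htt
          have hww : w = w₀ := mul_left_cancel₀ hdne (by linarith)
          rwa [hww] at hw
        · intro hw
          exact ⟨t, ht, w₀, hw, by linarith⟩
      set s : ℕ := d - 1 - t with hs
      have hsd : s < d := by omega
      have hsc : (s : ℤ) = (d : ℤ) - 1 - t := by omega
      have hFn : F - n = (d : ℤ) * (F' - w₀) + (s : ℤ) * A := by
        rw [hsc, hF]
        linear_combination (-1 : ℤ) * hw₀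
      have iff2 : inS (m + 1) a (F - n) ↔ inS m b (F' - w₀) := by
        rw [hsplit]
        constructor
        · rintro ⟨t', ht', w, hw, heq⟩
          have hts : t' = s := huniq (F - n) t' s ht' hsd
            ⟨w, by linarith⟩ ⟨F' - w₀, by linarith⟩
          subst hts
          have hww : w = F' - w₀ := mul_left_cancel₀ hdne (by linarith)
          rwa [hww] at hw
        · intro hw
          exact ⟨s, hsd, F' - w₀, hw, hFn⟩
      rw [iff1, iff2]
      exact hF' w₀

/-- Natural-number membership in the semigroup. -/
def inN (m : ℕ) (a : ℕ → ℕ) (n : ℕ) : Prop :=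
  ∃ x : ℕ → ℕ, n = ∑ i ∈ Finset.Icc 1 m, a i * x i

/-- The numerical semigroup of a telescopic sequence is symmetric: for every
`0 ≤ n ≤ 2g - 1`, `n ∈ S` if and only if `2g - 1 - n ∉ S`, where `g ≥ 1` is the
number of gaps of `S = a_1 ℤ_{≥0} + ⋯ + a_m ℤ_{≥0}`. -/
theorem telescopic_symmetric
    (m : ℕ) (hm : 2 ≤ m) (a : ℕ → ℕ)
    (hpos : ∀ i, 1 ≤ i → i ≤ m → 0 < a i)
    (hgcd : (Finset.Icc 1 m).gcd a = 1)
    (htel : Telescopic m a)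
    (g : ℕ)
    (hg : g = Set.ncard {n : ℕ | ¬ ∃ x : ℕ → ℕ, n = ∑ i ∈ Finset.Icc 1 m, a i * x i})
    (hg1 : 1 ≤ g) :
    ∀ n : ℕ, n ≤ 2 * g - 1 →
      ((∃ x : ℕ → ℕ, n = ∑ i ∈ Finset.Icc 1 m, a i * x i) ↔
        ¬ ∃ x : ℕ → ℕ, 2 * g - 1 - n = ∑ i ∈ Finset.Icc 1 m, a i * x i) := by
  classical
  have hg' : g = {n : ℕ | ¬ inN m a n}.ncard := hg
  clear hg
  obtain ⟨F, hF⟩ := key m (by omega) a hpos hgcd htel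
  have hcast : ∀ n : ℕ, inN m a n ↔ inS m a n := by
    intro n
    constructor
    · rintro ⟨x, hx⟩
      exact ⟨x, by exact_mod_cast congrArg (Nat.cast : ℕ → ℤ) hx⟩
    · rintro ⟨x, hx⟩
      exact ⟨x, by exact_mod_cast hx⟩
  have hnonneg : ∀ z : ℤ, inS m a z → 0 ≤ z := by
    rintro z ⟨x, rfl⟩
    exact Finset.sum_nonneg fun i _ => by positivity
  have hGne : {n : ℕ | ¬ inN m a n}.Nonempty := by
    by_contra h
    rw [Set.not_nonempty_iff_eq_empty] at h
    rw [h, Set.ncard_empty] at hg'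
    omega
  obtain ⟨n₀, hn₀⟩ := hGne
  have hF0 : 0 ≤ F := by
    have h1 : ¬ inS m a n₀ := fun h => hn₀ ((hcast n₀).mpr h)
    have h2 : inS m a (F - n₀) := by
      by_contra h
      exact h1 ((hF n₀).mpr h)
    have h3 := hnonneg _ h2
    have h4 : (0 : ℤ) ≤ (n₀ : ℤ) := Int.natCast_nonneg n₀
    linarith
  set N := F.toNat with hN
  have hNF : (N : ℤ) = F := Int.toNat_of_nonneg hF0
  have hsymN : ∀ n : ℕ, n ≤ N → (inN m a n ↔ ¬ inN m a (N - n)) := by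
    intro n hn
    rw [hcast, hcast]
    have hc : ((N - n : ℕ) : ℤ) = F - n := by omega
    rw [hc]
    exact hF n
  have hbig : ∀ n : ℕ, N < n → inN m a n := by
    intro n hn
    rw [hcast]
    apply (hF n).mpr
    intro h
    have := hnonneg _ h
    omega
  set G : Finset ℕ := (Finset.range (N + 1)).filter (fun n => ¬ inN m a n) with hG
  set G' : Finset ℕ := (Finset.range (N + 1)).filter (fun n => inN m a n) with hG'
  have hgG : g = G.card := by
    rw [hg', ← Set.ncard_coe_finset]
    congr 1
    rw [hG]
    ext n
    simp only [Set.mem_setOf_eq, Finset.mem_coe, Finset.mem_filter, Finset.mem_range]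
    constructor
    · intro h
      refine ⟨?_, h⟩
      by_contra hc
      exact h (hbig n (by omega))
    · exact fun h => h.2
  have hcard : G.card = G'.card := by
    apply Finset.card_nbij' (i := fun n => N - n) (j := fun n => N - n)
    · intro x hx
      rw [Finset.mem_coe, hG] at hx; rw [Finset.mem_coe]; dsimp only
      rw [Finset.mem_filter, Finset.mem_range] at hx ⊢
      obtain ⟨hx1, hx2⟩ := hx
      refine ⟨by omega, ?_⟩
      by_contra hc
      exact hx2 ((hsymN x (by omega)).mpr hc)
    · intro x hx
      rw [Finset.mem_coe, hG'] at hx; rw [Finset.mem_coe]; dsimp only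
      rw [Finset.mem_filter, Finset.mem_range] at hx ⊢
      obtain ⟨hx1, hx2⟩ := hx
      refine ⟨by omega, ?_⟩
      intro hc
      exact (hsymN (N - x) (by omega)).mp hc (by
        rwa [show N - (N - x) = x by omega])
    · intro x hx
      rw [Finset.mem_coe, hG, Finset.mem_filter, Finset.mem_range] at hx; dsimp only
      omega
    · intro x hx
      rw [Finset.mem_coe, hG', Finset.mem_filter, Finset.mem_range] at hx; dsimp only
      omega
  have htot : G'.card + G.card = N + 1 := by
    rw [hG, hG']
    rw [Finset.card_filter_add_card_filter_not, Finset.card_range]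
  have hN2g : N = 2 * g - 1 ∧ N + 1 = 2 * g := by omega
  intro n hn
  have hnN : n ≤ N := by omega
  have heq : 2 * g - 1 - n = N - n := by omega
  show inN m a n ↔ ¬ inN m a (2 * g - 1 - n)
  rw [heq]
  exact hsymN n hnN
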